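/- Let A and B be unital C*-algebras and let f : A → B be a 2-positive linear map. Then for all a, b ∈ A: (1) f(b*a) · f(a*b) ≤ ‖f(a*a)‖ • f(b*b); (2) f(a*b) · f(b*a) ≤ ‖f(b*b)‖ • f(a*a); (3) ‖f(a*b)‖² ≤ ‖f(a*a)‖ · ‖f(b*b)‖. -/

import Mathlib

open Finset in
lemma quad_nonneg {B : Type*} [CStarAlgebra B] [PartialOrder B] [StarOrderedRing B]
    (N : Matrix (Fin 2) (Fin 2) B) (hN : ∃ D : Matrix (Fin 2) (Fin 2) B, N = star D * D)
    (u : Fin 2 → B) :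
    0 ≤ ∑ i, ∑ j, star (u i) * N i j * u j := by
  obtain ⟨D, rfl⟩ := hN
  have key : (∑ i, ∑ j, star (u i) * ((star D * D) i j) * u j)
      = ∑ k, star (∑ i, D k i * u i) * (∑ j, D k j * u j) := by
    simp only [Matrix.mul_apply, Matrix.star_apply, Finset.mul_sum, Finset.sum_mul,
      star_sum, star_mul, star_add, add_mul, mul_add, Fin.sum_univ_two]
    noncomm_ring
  rw [key]
  exact Finset.sum_nonneg fun k _ => star_mul_self_nonneg _

lemma matrix_cs {B : Type*} [CStarAlgebra B] [PartialOrder B] [StarOrderedRing B]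
    (N : Matrix (Fin 2) (Fin 2) B) (hN : ∃ D : Matrix (Fin 2) (Fin 2) B, N = star D * D) :
    star (N 0 1) * N 0 1 ≤ ‖N 0 0‖ • N 1 1 := by
  set x := N 0 0 with hxdef
  set y := N 0 1 with hydef
  set z := N 1 1 with hzdef
  have herm : N 1 0 = star y := by
    obtain ⟨D, hD⟩ := hN
    have : star N = N := by rw [hD, star_mul, star_star]
    calc N 1 0 = star N 1 0 := by rw [this]
      _ = star y := by rw [Matrix.star_apply, hydef]
  have hx : (0 : B) ≤ x := by
    have := quad_nonneg N hN ![1, 0]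
    simpa [Fin.sum_univ_two] using this
  have hz : (0 : B) ≤ z := by
    have := quad_nonneg N hN ![0, 1]
    simpa [Fin.sum_univ_two] using this
  have hx1 : x ≤ algebraMap ℝ B ‖x‖ :=
    IsSelfAdjoint.le_algebraMap_norm_self (IsSelfAdjoint.of_nonneg hx)
  have hconj : star y * x * y ≤ ‖x‖ • (star y * y) := by
    calc star y * x * y ≤ star y * algebraMap ℝ B ‖x‖ * y := star_left_conjugate_le_conjugate hx1 y
      _ = ‖x‖ • (star y * y) := by
        rw [Algebra.algebraMap_eq_smul_one]
        rw [mul_smul_comm, mul_one, smul_mul_assoc]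
  have key : ∀ s : ℝ, 0 ≤ s → (2 * s - s * s * ‖x‖) • (star y * y) ≤ z := by
    intro s hs
    have hq := quad_nonneg N hN ![-(s • y), 1]
    have hq' : (0 : B) ≤ (s * s) • (star y * x * y)
        - (s • (star y * y) + s • (star y * y)) + z := by
      convert hq using 1
      simp only [Fin.sum_univ_two, Matrix.cons_val_zero, Matrix.cons_val_one, Matrix.head_cons,
        star_neg, star_smul, star_trivial, star_one, neg_mul, mul_neg, one_mul, mul_one,
        smul_mul_assoc, mul_smul_comm, smul_smul, neg_neg, herm, ← hxdef, ← hydef, ← hzdef]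
      module
    have h2 : (s * s) • (star y * x * y) ≤ (s * s) • (‖x‖ • (star y * y)) :=
      smul_le_smul_of_nonneg_left hconj (mul_nonneg hs hs)
    have h3 : (2 * s) • (star y * y) ≤ (s * s) • (star y * x * y) + z := by
      have := add_le_add_left hq' ((s • (star y * y) + s • (star y * y)))
      simp only [zero_add] at this
      calc (2 * s) • (star y * y) = s • (star y * y) + s • (star y * y) := by module
        _ ≤ (s * s) • (star y * x * y) - (s • (star y * y) + s • (star y * y)) + z
            + (s • (star y * y) + s • (star y * y)) := by
          exact le_add_of_nonneg_left hq' |>.trans_eq (by abel)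
        _ = (s * s) • (star y * x * y) + z := by abel
    have h4 : (2 * s) • (star y * y) ≤ (s * s * ‖x‖) • (star y * y) + z := by
      refine h3.trans (add_le_add_left ?_ z)
      exact h2.trans_eq (smul_smul _ _ _)
    calc (2 * s - s * s * ‖x‖) • (star y * y)
        = (2 * s) • (star y * y) - (s * s * ‖x‖) • (star y * y) := by module
      _ ≤ z := by
        rw [sub_le_iff_le_add]
        exact h4.trans_eq (by abel)
  rcases eq_or_lt_of_le (norm_nonneg x) with ht | ht
  · -- ‖x‖ = 0
    have hyy : star y * y = 0 := by
      by_contra hne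
      have hnorm : ∀ s : ℝ, 0 ≤ s → 2 * s * ‖star y * y‖ ≤ ‖z‖ := by
        intro s hs
        have hk := key s hs
        rw [← ht] at hk
        simp only [mul_zero, sub_zero] at hk
        have hnn : (0 : B) ≤ (2 * s) • (star y * y) :=
          smul_nonneg (by linarith) (star_mul_self_nonneg y)
        have := CStarAlgebra.norm_le_norm_of_nonneg_of_le hnn hk
        rwa [norm_smul, Real.norm_eq_abs, abs_of_nonneg (by linarith)] at this
      have hpos : 0 < ‖star y * y‖ :=
        lt_of_le_of_ne (norm_nonneg _) (Ne.symm (norm_ne_zero_iff.mpr hne))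
      have h1 := hnorm ((‖z‖ + 1) / (2 * ‖star y * y‖)) (by positivity)
      have hz0 : (0:ℝ) ≤ ‖z‖ := norm_nonneg z
      have heq : 2 * ((‖z‖ + 1) / (2 * ‖star y * y‖)) * ‖star y * y‖ = ‖z‖ + 1 := by
        field_simp
      linarith
    rw [hyy, ← ht, zero_smul]
  · -- ‖x‖ > 0
    have hk := key (1 / ‖x‖) (by positivity)
    have hcoef : (2 * (1 / ‖x‖) - 1 / ‖x‖ * (1 / ‖x‖) * ‖x‖) = 1 / ‖x‖ := by
      field_simp
      ring
    rw [hcoef] at hk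
    have hone : ‖x‖ • ((1 / ‖x‖) • (star y * y)) = star y * y := by
      rw [smul_smul, mul_one_div, div_self ht.ne', one_smul]
    calc star y * y = ‖x‖ • ((1 / ‖x‖) • (star y * y)) := hone.symm
      _ ≤ ‖x‖ • z := smul_le_smul_of_nonneg_left hk (norm_nonneg x)

lemma cs_helper {A B : Type*} [CStarAlgebra A] [PartialOrder A] [StarOrderedRing A]
    [CStarAlgebra B] [PartialOrder B] [StarOrderedRing B]
    (f : A →ₗ[ℂ] B)
    (h2pos : ∀ M : Matrix (Fin 2) (Fin 2) A,
      (∃ C : Matrix (Fin 2) (Fin 2) A, M = star C * C) →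
      ∃ D : Matrix (Fin 2) (Fin 2) B, M.map f = star D * D)
    (a b : A) :
    f (star b * a) = star (f (star a * b)) ∧
      f (star b * a) * f (star a * b) ≤ ‖f (star a * a)‖ • f (star b * b) := by
  set M : Matrix (Fin 2) (Fin 2) A :=
    !![star a * a, star a * b; star b * a, star b * b] with hMdef
  have hM : ∃ C : Matrix (Fin 2) (Fin 2) A, M = star C * C := by
    refine ⟨!![a, b; 0, 0], ?_⟩
    ext i j
    fin_cases i <;> fin_cases j <;>
      simp [hMdef, Matrix.mul_apply, Fin.sum_univ_two, Matrix.star_apply]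
  have hN : ∃ D : Matrix (Fin 2) (Fin 2) B, M.map f = star D * D := h2pos M hM
  have herm : (M.map f) 1 0 = star ((M.map f) 0 1) := by
    obtain ⟨D, hD⟩ := hN
    have hsa : star (M.map f) = M.map f := by rw [hD, star_mul, star_star]
    conv_lhs => rw [← hsa]
    rw [Matrix.star_apply]
  have hcs := matrix_cs (M.map f) hN
  have e00 : (M.map f) 0 0 = f (star a * a) := by simp [hMdef]
  have e01 : (M.map f) 0 1 = f (star a * b) := by simp [hMdef]
  have e10 : (M.map f) 1 0 = f (star b * a) := by simp [hMdef]
  have e11 : (M.map f) 1 1 = f (star b * b) := by simp [hMdef]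
  rw [e01, e10] at herm
  rw [e00, e01, e11, ← herm] at hcs
  exact ⟨herm, hcs⟩

/-- Cauchy–Schwarz for 2-positive maps: if `f : A → B` is a 2-positive linear map between
unital C*-algebras (positive 2×2 matrices over `A`, i.e. those of the form `C* C`, are sent
entrywise to positive 2×2 matrices over `B`), then for all `a b : A`:
(1) `f(b* a) f(a* b) ≤ ‖f(a* a)‖ • f(b* b)`;
(2) `f(a* b) f(b* a) ≤ ‖f(b* b)‖ • f(a* a)`;
(3) `‖f(a* b)‖² ≤ ‖f(a* a)‖ ‖f(b* b)‖`. -/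
theorem stmt_11 {A B : Type*} [CStarAlgebra A] [PartialOrder A] [StarOrderedRing A]
    [CStarAlgebra B] [PartialOrder B] [StarOrderedRing B]
    (f : A →ₗ[ℂ] B)
    (h2pos : ∀ M : Matrix (Fin 2) (Fin 2) A,
      (∃ C : Matrix (Fin 2) (Fin 2) A, M = star C * C) →
      ∃ D : Matrix (Fin 2) (Fin 2) B, M.map f = star D * D)
    (a b : A) :
    f (star b * a) * f (star a * b) ≤ ‖f (star a * a)‖ • f (star b * b) ∧
      f (star a * b) * f (star b * a) ≤ ‖f (star b * b)‖ • f (star a * a) ∧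
      ‖f (star a * b)‖ ^ 2 ≤ ‖f (star a * a)‖ * ‖f (star b * b)‖ := by
  obtain ⟨herm, h1⟩ := cs_helper f h2pos a b
  obtain ⟨_, h2⟩ := cs_helper f h2pos b a
  refine ⟨h1, h2, ?_⟩
  have hnn : (0 : B) ≤ f (star b * a) * f (star a * b) := by
    rw [herm]; exact star_mul_self_nonneg _
  have hle := CStarAlgebra.norm_le_norm_of_nonneg_of_le hnn h1
  rw [norm_smul, Real.norm_eq_abs, abs_of_nonneg (norm_nonneg _)] at hle
  calc ‖f (star a * b)‖ ^ 2 = ‖star (f (star a * b)) * f (star a * b)‖ := by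
        rw [CStarRing.norm_star_mul_self, sq]
    _ = ‖f (star b * a) * f (star a * b)‖ := by rw [herm]
    _ ≤ ‖f (star a * a)‖ * ‖f (star b * b)‖ := hle
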